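/- For an integer n ≥ 3 and p ∈ [1,∞), let ν := (1/(2n))δ_0 + (1/n)·Σ_{i=1}^{n−1} δ_{i/n} + (1/(2n))δ_1, μ := (1/n)·Σ_{i=1}^{n} δ_{(2i−1)/(2n)}, and η := (3/(2n))δ_{1/n} + (1/n)·Σ_{i=2}^{n−2} δ_{i/n} + (3/(2n))δ_{(n−1)/n}. Then W_p(μ,ν) = W_p(η,μ) = 1/(2n) and W_p(η,ν) = n^{−1−1/p}, so that W_p(μ,ν)/W_p(η,ν) = n^{1/p}/2. Consequently (since η ≤_c μ ≤_c ν, so μ ∨_c ν = ν and μ ∨_c η = μ, and μ ∧_c ν = μ and μ ∧_c η = η), the convex-order lattice operations ∧_c and ∨_c are not Lipschitz continuous with respect to W_p. -/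

import Mathlib

open MeasureTheory Filter Set
open scoped Classical

noncomputable section

/-- The quantile function of a measure `μ` on `ℝ`:
`F_μ^{-1}(u) = inf {x : μ((-∞, x]) ≥ u}`. -/
def quantile (μ : Measure ℝ) (u : ℝ) : ℝ :=
  sInf {x : ℝ | u ≤ (μ (Iic x)).toReal}

/-- The `p`-Wasserstein distance on the real line, expressed via quantile functions. -/
def Wp (p : ℝ) (μ ν : Measure ℝ) : ℝ :=
  (∫ u in Ioo (0:ℝ) 1, |quantile μ u - quantile ν u| ^ p) ^ (1 / p)

/-- `μ ∈ P_p(ℝ)`: a Borel probability measure on `ℝ` with finite `p`-th moment. -/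
def MemPp (p : ℝ) (μ : Measure ℝ) : Prop :=
  IsProbabilityMeasure μ ∧ Integrable (fun x => |x| ^ p) μ

/-- The convex hull of a function `F` on a set `S`: the greatest convex function on `S`
bounded above by `F` (pointwise supremum of all convex minorants). -/
def convexHullFn (S : Set ℝ) (F : ℝ → ℝ) : ℝ → ℝ :=
  fun x => sSup {y : ℝ | ∃ g : ℝ → ℝ, ConvexOn ℝ S g ∧ (∀ z ∈ S, g z ≤ F z) ∧ y = g x}

/-- Left-hand derivative. -/
def leftDeriv (f : ℝ → ℝ) (x : ℝ) : ℝ := derivWithin f (Iio x) x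

/-- Right-hand derivative. -/
def rightDeriv (f : ℝ → ℝ) (x : ℝ) : ℝ := derivWithin f (Ioi x) x

/-- `G(v) = ∫₀^v (F_μ^{-1}(u) - F_ν^{-1}(u)) du`. -/
def Gfun (μ ν : Measure ℝ) (v : ℝ) : ℝ :=
  ∫ u in Ioo (0:ℝ) v, (quantile μ u - quantile ν u)

/-- The Wasserstein projection `I(μ,ν)`: the image of Lebesgue measure on `(0,1)` under
`u ↦ F_μ^{-1}(u) - ∂₋ co(G)(u)`. -/
def proj_I (μ ν : Measure ℝ) : Measure ℝ :=
  Measure.map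
    (fun u => quantile μ u - leftDeriv (convexHullFn (Icc 0 1) (Gfun μ ν)) u)
    (volume.restrict (Ioo (0:ℝ) 1))

/-- The Wasserstein projection `J(μ,ν)`: the image of Lebesgue measure on `(0,1)` under
`u ↦ F_ν^{-1}(u) + ∂₋ co(G)(u)`. -/
def proj_J (μ ν : Measure ℝ) : Measure ℝ :=
  Measure.map
    (fun u => quantile ν u + leftDeriv (convexHullFn (Icc 0 1) (Gfun μ ν)) u)
    (volume.restrict (Ioo (0:ℝ) 1))

/-- The convex order `μ ≤_c ν`. -/
def ConvexOrder (μ ν : Measure ℝ) : Prop :=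
  ∀ f : ℝ → ℝ, ConvexOn ℝ univ f → Integrable f μ → Integrable f ν →
    ∫ x, f x ∂μ ≤ ∫ x, f x ∂ν

/-- `f` is càdlàg on `[a,b]`: right-continuous on `[a,b)` and with left limits on `(a,b]`. -/
def Cadlag (f : ℝ → ℝ) (a b : ℝ) : Prop :=
  (∀ x ∈ Ico a b, Tendsto f (nhdsWithin x (Ici x)) (nhds (f x))) ∧
  (∀ x ∈ Ioc a b, ∃ l : ℝ, Tendsto f (nhdsWithin x (Iio x)) (nhds l))

namespace Aux

lemma quantile_eq_of {μ : Measure ℝ} {u a : ℝ}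
    (hfin : μ (Iio a) ≠ ⊤)
    (h1 : u ≤ (μ (Iic a)).toReal) (h2 : (μ (Iio a)).toReal < u) :
    quantile μ u = a := by
  apply IsLeast.csInf_eq
  refine ⟨h1, fun x hx => ?_⟩
  by_contra h
  push_neg at h
  have hsub : Iic x ⊆ Iio a := fun y hy => lt_of_le_of_lt hy h
  have : (μ (Iic x)).toReal ≤ (μ (Iio a)).toReal :=
    ENNReal.toReal_mono hfin (measure_mono hsub)
  simp only [Set.mem_setOf_eq] at hx
  linarith

lemma sum_dirac_apply (s : Finset ℕ) (c : ENNReal) (a : ℕ → ℝ) (A : Set ℝ) :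
    ((∑ i ∈ s, c • Measure.dirac (a i)) A) = ∑ i ∈ s, (if a i ∈ A then c else 0) := by
  rw [Measure.finset_sum_apply]
  refine Finset.sum_congr rfl fun i _ => ?_
  rw [Measure.smul_apply, Measure.dirac_apply, Set.indicator_apply]
  by_cases h : a i ∈ A <;> simp [h]

lemma sum_ite_count (s : Finset ℕ) (P : ℕ → Prop) [DecidablePred P] (c : ENNReal) :
    (∑ j ∈ s, if P j then c else 0) = (s.filter P).card * c := by
  rw [← Finset.sum_filter, Finset.sum_const, nsmul_eq_mul]

variable (n : ℕ)

def nuM : Measure ℝ := (1 / (2 * n) : ENNReal) • Measure.dirac (0:ℝ)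
        + ∑ i ∈ Finset.Icc 1 (n - 1), (1 / n : ENNReal) • Measure.dirac ((i : ℝ) / n)
        + (1 / (2 * n) : ENNReal) • Measure.dirac (1:ℝ)

def muM : Measure ℝ := ∑ i ∈ Finset.Icc 1 n,
        (1 / n : ENNReal) • Measure.dirac ((2 * (i : ℝ) - 1) / (2 * n))

def etaM : Measure ℝ := (3 / (2 * n) : ENNReal) • Measure.dirac ((1 : ℝ) / n)
        + ∑ i ∈ Finset.Icc 2 (n - 2), (1 / n : ENNReal) • Measure.dirac ((i : ℝ) / n)
        + (3 / (2 * n) : ENNReal) • Measure.dirac (((n : ℝ) - 1) / n)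

lemma nuM_apply (A : Set ℝ) :
    nuM n A = (if (0:ℝ) ∈ A then (1/(2*n) : ENNReal) else 0)
      + ((Finset.Icc 1 (n-1)).filter (fun j : ℕ => ((j:ℝ)/n) ∈ A)).card * (1/n : ENNReal)
      + (if (1:ℝ) ∈ A then (1/(2*n) : ENNReal) else 0) := by
  rw [nuM, Measure.add_apply, Measure.add_apply,
    sum_dirac_apply (Finset.Icc 1 (n-1)) (1/n) (fun i => (i:ℝ)/n) A, sum_ite_count,
    Measure.smul_apply, Measure.dirac_apply, Set.indicator_apply,
    Measure.smul_apply, Measure.dirac_apply, Set.indicator_apply]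
  simp only [smul_eq_mul, Pi.one_apply, mul_ite, mul_one, mul_zero]

lemma muM_apply (A : Set ℝ) :
    muM n A = ((Finset.Icc 1 n).filter
        (fun j : ℕ => ((2*(j:ℝ)-1)/(2*n)) ∈ A)).card * (1/n : ENNReal) := by
  rw [muM, sum_dirac_apply (Finset.Icc 1 n) (1/n) (fun i => (2*(i:ℝ)-1)/(2*n)) A,
    sum_ite_count]

lemma etaM_apply (A : Set ℝ) :
    etaM n A = (if ((1:ℝ)/n) ∈ A then (3/(2*n) : ENNReal) else 0)
      + ((Finset.Icc 2 (n-2)).filter (fun j : ℕ => ((j:ℝ)/n) ∈ A)).card * (1/n : ENNReal)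
      + (if (((n:ℝ)-1)/n) ∈ A then (3/(2*n) : ENNReal) else 0) := by
  rw [etaM, Measure.add_apply, Measure.add_apply,
    sum_dirac_apply (Finset.Icc 2 (n-2)) (1/n) (fun i => (i:ℝ)/n) A, sum_ite_count,
    Measure.smul_apply, Measure.dirac_apply, Set.indicator_apply,
    Measure.smul_apply, Measure.dirac_apply, Set.indicator_apply]
  simp only [smul_eq_mul, Pi.one_apply, mul_ite, mul_one, mul_zero]

lemma piece_ne_top (hn : 3 ≤ n) (a e : ℕ) (d : ENNReal) (hd : d = n ∨ d = 2*n) :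
    (a : ENNReal) * ((e : ENNReal)/d) ≠ ⊤ := by
  have hd0 : d ≠ 0 := by
    rcases hd with h | h <;> subst h <;> simp <;> omega
  exact ENNReal.mul_ne_top (ENNReal.natCast_ne_top _)
    (ENNReal.div_lt_top (ENNReal.natCast_ne_top _) hd0).ne

lemma toReal3 (hn : 3 ≤ n) (a b c e : ℕ) :
    ((a : ENNReal)*((e:ENNReal)/(2*(n:ENNReal))) + (b : ENNReal)*(1/(n:ENNReal))
      + (c : ENNReal)*((e:ENNReal)/(2*(n:ENNReal)))).toReal
      = (a:ℝ)*(e:ℝ)/(2*(n:ℝ)) + (b:ℝ)/(n:ℝ) + (c:ℝ)*(e:ℝ)/(2*(n:ℝ)) := by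
  have h1 : (1:ENNReal) = ((1:ℕ):ENNReal) := by norm_num
  rw [ENNReal.toReal_add (ENNReal.add_ne_top.mpr
      ⟨piece_ne_top n hn a e _ (Or.inr rfl),
       by rw [h1]; exact piece_ne_top n hn b 1 _ (Or.inl rfl)⟩)
      (piece_ne_top n hn c e _ (Or.inr rfl)),
    ENNReal.toReal_add (piece_ne_top n hn a e _ (Or.inr rfl))
      (by rw [h1]; exact piece_ne_top n hn b 1 _ (Or.inl rfl))]
  simp only [ENNReal.toReal_mul, ENNReal.toReal_div, ENNReal.toReal_natCast,
    ENNReal.toReal_ofNat, ENNReal.toReal_one]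
  ring

lemma nuM_ne_top (hn : 3 ≤ n) (A : Set ℝ) : nuM n A ≠ ⊤ := by
  have hn' : (n : ENNReal) ≠ 0 := by simp; omega
  have h2n : (2 * (n : ENNReal)) ≠ 0 := by
    refine mul_ne_zero (by norm_num) hn'
  rw [nuM_apply]
  refine ENNReal.add_ne_top.mpr ⟨ENNReal.add_ne_top.mpr ⟨?_, ?_⟩, ?_⟩
  · split
    · exact (ENNReal.div_lt_top ENNReal.one_ne_top h2n).ne
    · exact ENNReal.zero_ne_top
  · exact ENNReal.mul_ne_top (ENNReal.natCast_ne_top _)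
      (ENNReal.div_lt_top ENNReal.one_ne_top hn').ne
  · split
    · exact (ENNReal.div_lt_top ENNReal.one_ne_top h2n).ne
    · exact ENNReal.zero_ne_top

lemma muM_ne_top (hn : 3 ≤ n) (A : Set ℝ) : muM n A ≠ ⊤ := by
  have hn' : (n : ENNReal) ≠ 0 := by simp; omega
  rw [muM_apply]
  exact ENNReal.mul_ne_top (ENNReal.natCast_ne_top _)
      (ENNReal.div_lt_top ENNReal.one_ne_top hn').ne

lemma etaM_ne_top (hn : 3 ≤ n) (A : Set ℝ) : etaM n A ≠ ⊤ := by
  have hn' : (n : ENNReal) ≠ 0 := by simp; omega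
  have h2n : (2 * (n : ENNReal)) ≠ 0 := by
    refine mul_ne_zero (by norm_num) hn'
  rw [etaM_apply]
  refine ENNReal.add_ne_top.mpr ⟨ENNReal.add_ne_top.mpr ⟨?_, ?_⟩, ?_⟩
  · split
    · exact (ENNReal.div_lt_top (by norm_num) h2n).ne
    · exact ENNReal.zero_ne_top
  · exact ENNReal.mul_ne_top (ENNReal.natCast_ne_top _)
      (ENNReal.div_lt_top ENNReal.one_ne_top hn').ne
  · split
    · exact (ENNReal.div_lt_top (by norm_num) h2n).ne
    · exact ENNReal.zero_ne_top

/-! ### CDF evaluations -/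

lemma mem_div_iff (hn0 : (0:ℝ) < n) (j k : ℕ) :
    ((j:ℝ)/n ≤ (k:ℝ)/n) ↔ j ≤ k := by
  rw [div_le_div_iff_of_pos_right hn0]
  exact Nat.cast_le

lemma mem_div_lt_iff₀ (hn0 : (0:ℝ) < n) (j k : ℕ) :
    ((j:ℝ)/n < (k:ℝ)/n) ↔ j < k := by
  rw [div_lt_div_iff_of_pos_right hn0]
  exact Nat.cast_lt

lemma filter_eq_any {s t : Finset ℕ} {P : ℕ → Prop} {i1 : DecidablePred P}
    {i2 : DecidablePred P} (h : @Finset.filter _ P i1 s = t) :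
    @Finset.filter _ P i2 s = t := by
  convert h

lemma mu_Iic (hn : 3 ≤ n) (i : ℕ) (h1 : 1 ≤ i) (h2 : i ≤ n) :
    ((muM n (Iic ((2*(i:ℝ)-1)/(2*n)))).toReal) = (i:ℝ) / n := by
  have hn0 : (0:ℝ) < n := by positivity
  rw [muM_apply]
  have hfilter : (Finset.Icc 1 n).filter
      (fun j : ℕ => ((2*(j:ℝ)-1)/(2*n)) ∈ Iic ((2*(i:ℝ)-1)/(2*n))) = Finset.Icc 1 i := by
    ext j
    simp only [Finset.mem_filter, Finset.mem_Icc, mem_Iic,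
      div_le_div_iff_of_pos_right (show (0:ℝ) < 2*n by positivity)]
    constructor
    · rintro ⟨⟨ha, hb⟩, hc⟩
      refine ⟨ha, ?_⟩
      have : (j:ℝ) ≤ i := by linarith
      exact_mod_cast this
    · rintro ⟨ha, hb⟩
      have : (j:ℝ) ≤ i := Nat.cast_le.mpr hb
      exact ⟨⟨ha, le_trans hb h2⟩, by linarith⟩
  rw [filter_eq_any hfilter, Nat.card_Icc]
  have := toReal3 n hn 0 (i + 1 - 1) 0 1
  simpa using this

lemma mu_Iio (hn : 3 ≤ n) (i : ℕ) (h1 : 1 ≤ i) (h2 : i ≤ n) :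
    ((muM n (Iio ((2*(i:ℝ)-1)/(2*n)))).toReal) = ((i:ℝ) - 1) / n := by
  have hn0 : (0:ℝ) < n := by positivity
  rw [muM_apply]
  have hfilter : (Finset.Icc 1 n).filter
      (fun j : ℕ => ((2*(j:ℝ)-1)/(2*n)) ∈ Iio ((2*(i:ℝ)-1)/(2*n))) = Finset.Icc 1 (i-1) := by
    ext j
    simp only [Finset.mem_filter, Finset.mem_Icc, mem_Iio,
      div_lt_div_iff_of_pos_right (show (0:ℝ) < 2*n by positivity)]
    constructor
    · rintro ⟨⟨ha, hb⟩, hc⟩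
      refine ⟨ha, ?_⟩
      have : (j:ℝ) < i := by linarith
      have : j < i := by exact_mod_cast this
      omega
    · rintro ⟨ha, hb⟩
      have hji : j < i := by omega
      have : (j:ℝ) < i := Nat.cast_lt.mpr hji
      exact ⟨⟨ha, by omega⟩, by linarith⟩
  rw [filter_eq_any hfilter, Nat.card_Icc]
  have := toReal3 n hn 0 (i - 1 + 1 - 1) 0 1
  simp only [Nat.cast_zero, zero_mul, zero_div, zero_add, add_zero] at this
  rw [this]
  congr 1
  have : i - 1 + 1 - 1 = i - 1 := by omega
  rw [this, Nat.cast_sub h1, Nat.cast_one]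

lemma nu_Iic (hn : 3 ≤ n) (k : ℕ) (hk : k ≤ n) :
    (nuM n (Iic ((k:ℝ)/n))).toReal
      = 1/(2*(n:ℝ)) + ((min k (n-1) : ℕ):ℝ)/(n:ℝ)
        + (if n ≤ k then 1/(2*(n:ℝ)) else 0) := by
  have hn0 : (0:ℝ) < n := by positivity
  rw [nuM_apply]
  have h0 : (0:ℝ) ∈ Iic ((k:ℝ)/n) := by
    simp only [mem_Iic]; positivity
  have h1 : ((1:ℝ) ∈ Iic ((k:ℝ)/n)) ↔ n ≤ k := by
    simp only [mem_Iic, one_le_div hn0]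
    exact Nat.cast_le
  have hfilter : (Finset.Icc 1 (n-1)).filter (fun j : ℕ => ((j:ℝ)/n) ∈ Iic ((k:ℝ)/n))
      = Finset.Icc 1 (min k (n-1)) := by
    ext j
    simp only [Finset.mem_filter, Finset.mem_Icc]
    rw [show ((j:ℝ)/n ∈ Iic ((k:ℝ)/n)) ↔ j ≤ k from (mem_div_iff n hn0 j k)]
    omega
  rw [filter_eq_any hfilter, if_pos h0, Nat.card_Icc]
  by_cases hnk : n ≤ k
  · rw [if_pos (h1.mpr hnk), if_pos hnk]
    have := toReal3 n hn 1 (min k (n-1) + 1 - 1) 1 1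
    simpa using this
  · rw [if_neg (fun h => hnk (h1.mp h)), if_neg hnk]
    have := toReal3 n hn 1 (min k (n-1) + 1 - 1) 0 1
    simpa using this

lemma nu_Iio (hn : 3 ≤ n) (k : ℕ) (hk1 : 1 ≤ k) (hk : k ≤ n) :
    (nuM n (Iio ((k:ℝ)/n))).toReal = 1/(2*(n:ℝ)) + ((k - 1 : ℕ):ℝ)/(n:ℝ) := by
  have hn0 : (0:ℝ) < n := by positivity
  rw [nuM_apply]
  have h0 : (0:ℝ) ∈ Iio ((k:ℝ)/n) := by
    simp only [mem_Iio]
    have : (0:ℝ) < k := by exact_mod_cast hk1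
    positivity
  have h1 : ((1:ℝ) ∈ Iio ((k:ℝ)/n)) ↔ n < k := by
    simp only [mem_Iio, one_lt_div hn0]
    exact Nat.cast_lt
  have hfilter : (Finset.Icc 1 (n-1)).filter (fun j : ℕ => ((j:ℝ)/n) ∈ Iio ((k:ℝ)/n))
      = Finset.Icc 1 (k-1) := by
    ext j
    simp only [Finset.mem_filter, Finset.mem_Icc]
    rw [show ((j:ℝ)/n ∈ Iio ((k:ℝ)/n)) ↔ j < k from (mem_div_lt_iff₀ n hn0 j k)]
    omega
  rw [filter_eq_any hfilter, if_pos h0, if_neg (fun h => absurd (h1.mp h) (by omega)), Nat.card_Icc]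
  have := toReal3 n hn 1 (k - 1 + 1 - 1) 0 1
  rw [show k - 1 + 1 - 1 = k - 1 by omega] at this
  simpa using this

lemma nu_Iio_zero (hn : 3 ≤ n) :
    (nuM n (Iio (0:ℝ))).toReal = 0 := by
  have hn0 : (0:ℝ) < n := by positivity
  rw [nuM_apply]
  have hfilter : (Finset.Icc 1 (n-1)).filter (fun j : ℕ => ((j:ℝ)/n) ∈ Iio (0:ℝ))
      = ∅ := by
    ext j
    simp only [Finset.mem_filter, Finset.mem_Icc, mem_Iio, Finset.notMem_empty, iff_false]
    rintro ⟨-, hneg⟩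
    have : (0:ℝ) ≤ (j:ℝ)/n := by positivity
    linarith
  rw [filter_eq_any hfilter, if_neg (by simp : ¬ (0:ℝ) ∈ Iio (0:ℝ)),
    if_neg (by simp : ¬ (1:ℝ) ∈ Iio (0:ℝ))]
  simp

lemma eta_Iic (hn : 3 ≤ n) (k : ℕ) (hk1 : 1 ≤ k) (hk : k ≤ n - 1) :
    (etaM n (Iic ((k:ℝ)/n))).toReal
      = 3/(2*(n:ℝ)) + ((min k (n-2) - 1 : ℕ):ℝ)/(n:ℝ)
        + (if n - 1 ≤ k then 3/(2*(n:ℝ)) else 0) := by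
  have hn0 : (0:ℝ) < n := by positivity
  rw [etaM_apply]
  have h0 : ((1:ℝ)/n) ∈ Iic ((k:ℝ)/n) := by
    rw [show ((1:ℝ)/n) = ((1:ℕ):ℝ)/n by norm_num]
    exact (mem_div_iff n hn0 1 k).mpr hk1
  have h1 : ((((n:ℝ)-1)/n) ∈ Iic ((k:ℝ)/n)) ↔ n - 1 ≤ k := by
    rw [show ((n:ℝ)-1) = ((n-1:ℕ):ℝ) by rw [Nat.cast_sub (by omega)]; norm_num]
    exact mem_div_iff n hn0 (n-1) k
  have hfilter : (Finset.Icc 2 (n-2)).filter (fun j : ℕ => ((j:ℝ)/n) ∈ Iic ((k:ℝ)/n))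
      = Finset.Icc 2 (min k (n-2)) := by
    ext j
    simp only [Finset.mem_filter, Finset.mem_Icc]
    rw [show ((j:ℝ)/n ∈ Iic ((k:ℝ)/n)) ↔ j ≤ k from (mem_div_iff n hn0 j k)]
    omega
  rw [filter_eq_any hfilter, if_pos h0, Nat.card_Icc]
  by_cases hnk : n - 1 ≤ k
  · rw [if_pos (h1.mpr hnk), if_pos hnk]
    have := toReal3 n hn 1 (min k (n-2) + 1 - 2) 1 3
    rw [show min k (n-2) - 1 = min k (n-2) + 1 - 2 by omega]
    simpa using this
  · rw [if_neg (fun h => hnk (h1.mp h)), if_neg hnk]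
    have := toReal3 n hn 1 (min k (n-2) + 1 - 2) 0 3
    rw [show min k (n-2) - 1 = min k (n-2) + 1 - 2 by omega]
    simpa using this

lemma eta_Iio (hn : 3 ≤ n) (k : ℕ) (hk1 : 1 ≤ k) (hk : k ≤ n - 1) :
    (etaM n (Iio ((k:ℝ)/n))).toReal
      = if k = 1 then 0 else 3/(2*(n:ℝ)) + ((k - 2 : ℕ):ℝ)/(n:ℝ) := by
  have hn0 : (0:ℝ) < n := by positivity
  rw [etaM_apply]
  have h0 : (((1:ℝ)/n) ∈ Iio ((k:ℝ)/n)) ↔ 1 < k := by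
    rw [show ((1:ℝ)/n) = ((1:ℕ):ℝ)/n by norm_num]
    exact mem_div_lt_iff₀ n hn0 1 k
  have h1 : ¬ ((((n:ℝ)-1)/n) ∈ Iio ((k:ℝ)/n)) := by
    rw [show ((n:ℝ)-1) = ((n-1:ℕ):ℝ) by rw [Nat.cast_sub (by omega)]; norm_num]
    exact fun hmem => absurd ((mem_div_lt_iff₀ n hn0 (n-1) k).mp hmem) (by omega)
  have hfilter : (Finset.Icc 2 (n-2)).filter (fun j : ℕ => ((j:ℝ)/n) ∈ Iio ((k:ℝ)/n))
      = Finset.Icc 2 (min (k-1) (n-2)) := by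
    ext j
    simp only [Finset.mem_filter, Finset.mem_Icc]
    rw [show ((j:ℝ)/n ∈ Iio ((k:ℝ)/n)) ↔ j < k from (mem_div_lt_iff₀ n hn0 j k)]
    omega
  rw [filter_eq_any hfilter, if_neg h1, Nat.card_Icc]
  by_cases hk1' : k = 1
  · subst hk1'
    rw [if_neg (by rw [h0]; omega), if_pos rfl]
    have := toReal3 n hn 0 (min 0 (n-2) + 1 - 2) 0 3
    simpa using this
  · rw [if_pos (h0.mpr (by omega)), if_neg hk1']
    have := toReal3 n hn 1 (min (k-1) (n-2) + 1 - 2) 0 3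
    rw [show k - 2 = min (k-1) (n-2) + 1 - 2 by omega]
    simpa using this

/-! ### Quantile evaluations -/

lemma quantile_mu (hn : 3 ≤ n) (u : ℝ) (i : ℕ) (h1 : 1 ≤ i) (h2 : i ≤ n)
    (hu1 : u * (2*(n:ℝ)) ≤ 2*(i:ℝ)) (hu2 : 2*(i:ℝ) - 2 < u * (2*(n:ℝ))) :
    quantile (muM n) u = (2*(i:ℝ)-1)/(2*(n:ℝ)) := by
  have hn0 : (0:ℝ) < n := by positivity
  apply quantile_eq_of (muM_ne_top n hn _)
  · rw [mu_Iic n hn i h1 h2, le_div_iff₀ hn0]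
    linarith
  · rw [mu_Iio n hn i h1 h2, div_lt_iff₀ hn0]
    linarith

lemma quantile_nu (hn : 3 ≤ n) (u : ℝ) (k : ℕ) (hk : k ≤ n) (hu0 : 0 < u) (hu1 : u < 1)
    (hup : u * (2*(n:ℝ)) ≤ 2*(k:ℝ)+1) (hlo : 2*(k:ℝ) - 1 < u * (2*(n:ℝ))) :
    quantile (nuM n) u = (k:ℝ)/n := by
  have hn0 : (0:ℝ) < n := by positivity
  apply quantile_eq_of (nuM_ne_top n hn _)
  · rw [nu_Iic n hn k hk]
    by_cases hnk : n ≤ k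
    · rw [if_pos hnk]
      have hkn' : k = n := le_antisymm hk hnk
      rw [show min k (n-1) = n-1 from by omega, Nat.cast_sub (by omega), Nat.cast_one]
      have heq : 1/(2*(n:ℝ)) + ((n:ℝ)-1)/n + 1/(2*n) = 1 := by field_simp; ring
      linarith
    · rw [if_neg hnk, show min k (n-1) = k from by omega, add_zero]
      have heq : 1/(2*(n:ℝ)) + (k:ℝ)/n = (2*(k:ℝ)+1)/(2*n) := by field_simp; ring
      rw [heq, le_div_iff₀ (by positivity : (0:ℝ) < 2*n)]
      linarith
  · by_cases hk0 : k = 0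
    · subst hk0
      simp only [Nat.cast_zero, zero_div]
      rw [nu_Iio_zero n hn]
      exact hu0
    · rw [nu_Iio n hn k (by omega) hk, Nat.cast_sub (by omega), Nat.cast_one]
      have heq : 1/(2*(n:ℝ)) + ((k:ℝ)-1)/n = (2*(k:ℝ)-1)/(2*n) := by field_simp; ring
      rw [heq, div_lt_iff₀ (by positivity : (0:ℝ) < 2*n)]
      linarith

lemma quantile_eta (hn : 3 ≤ n) (u : ℝ) (k : ℕ) (hk1 : 1 ≤ k) (hk : k ≤ n-1)
    (hu0 : 0 < u) (hu1 : u < 1)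
    (hup : k ≤ n-2 → u * (2*(n:ℝ)) ≤ 2*(k:ℝ)+1)
    (hlo : 2 ≤ k → 2*(k:ℝ) - 1 < u * (2*(n:ℝ))) :
    quantile (etaM n) u = (k:ℝ)/n := by
  have hn0 : (0:ℝ) < n := by positivity
  apply quantile_eq_of (etaM_ne_top n hn _)
  · rw [eta_Iic n hn k hk1 hk]
    by_cases hnk : n - 1 ≤ k
    · rw [if_pos hnk,
        show min k (n-2) - 1 = n - 3 from by omega, Nat.cast_sub (by omega)]
      have heq : 3/(2*(n:ℝ)) + ((n:ℝ)-(3:ℕ))/n + 3/(2*n) = 1 := by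
        push_cast; field_simp; ring
      linarith
    · rw [if_neg hnk, add_zero,
        show min k (n-2) - 1 = k - 1 from by omega, Nat.cast_sub hk1, Nat.cast_one]
      have heq : 3/(2*(n:ℝ)) + ((k:ℝ)-1)/n = (2*(k:ℝ)+1)/(2*n) := by field_simp; ring
      rw [heq, le_div_iff₀ (by positivity : (0:ℝ) < 2*n)]
      exact hup (by omega)
  · rw [eta_Iio n hn k hk1 hk]
    by_cases hk1' : k = 1
    · rw [if_pos hk1']
      exact hu0
    · rw [if_neg hk1', Nat.cast_sub (by omega : 2 ≤ k)]
      have heq : 3/(2*(n:ℝ)) + ((k:ℝ)-(2:ℕ))/n = (2*(k:ℝ)-1)/(2*n) := by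
        push_cast; field_simp; ring
      rw [heq, div_lt_iff₀ (by positivity : (0:ℝ) < 2*n)]
      exact hlo (by omega)

/-! ### Pointwise quantile differences -/

lemma pointwise (hn : 3 ≤ n) (u : ℝ) (hu0 : 0 < u) (hu1 : u < 1) :
    |quantile (muM n) u - quantile (nuM n) u| = 1/(2*(n:ℝ)) ∧
    |quantile (etaM n) u - quantile (muM n) u| = 1/(2*(n:ℝ)) ∧
    quantile (etaM n) u - quantile (nuM n) u =
      (if u ≤ 1/(2*(n:ℝ)) then 1/(n:ℝ)
       else if 1 - 1/(2*(n:ℝ)) < u then -(1/(n:ℝ)) else 0) := by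
  have hn0 : (0:ℝ) < n := by positivity
  have h2n0 : (0:ℝ) < 2*n := by positivity
  set m := ⌈u * (2*(n:ℝ))⌉₊ with hm
  have hm1 : 1 ≤ m := by
    rw [hm]
    exact Nat.one_le_ceil_iff.mpr (by positivity)
  have hub : u * (2*(n:ℝ)) ≤ m := Nat.le_ceil _
  have hm2n : m ≤ 2*n := by
    rw [hm]
    apply Nat.ceil_le.mpr
    push_cast
    nlinarith
  have hlb : (m:ℝ) - 1 < u * (2*(n:ℝ)) := by
    have := Nat.ceil_lt_add_one (le_of_lt (by positivity : (0:ℝ) < u * (2*(n:ℝ))))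
    rw [← hm] at this
    linarith
  set i := (m+1)/2 with hi
  set k := m/2 with hk
  set k' := min (max k 1) (n-1) with hk'
  have hi1 : 1 ≤ i := by omega
  have hin : i ≤ n := by omega
  have hkn : k ≤ n := by omega
  have hk'1 : 1 ≤ k' := by omega
  have hk'n : k' ≤ n - 1 := by omega
  have e1 : (m:ℝ) ≤ 2*(i:ℝ) := by exact_mod_cast (by omega : m ≤ 2*i)
  have e2 : 2*(i:ℝ) ≤ (m:ℝ) + 1 := by exact_mod_cast (by omega : 2*i ≤ m + 1)
  have e3 : 2*(k:ℝ) ≤ (m:ℝ) := by exact_mod_cast (by omega : 2*k ≤ m)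
  have e4 : (m:ℝ) ≤ 2*(k:ℝ)+1 := by exact_mod_cast (by omega : m ≤ 2*k+1)
  have qmu : quantile (muM n) u = (2*(i:ℝ)-1)/(2*(n:ℝ)) :=
    quantile_mu n hn u i hi1 hin (by linarith) (by linarith)
  have qnu : quantile (nuM n) u = (k:ℝ)/n :=
    quantile_nu n hn u k hkn hu0 hu1 (by linarith) (by linarith)
  have qeta : quantile (etaM n) u = (k':ℝ)/n := by
    apply quantile_eta n hn u k' hk'1 hk'n hu0 hu1
    · intro hk'small
      have : m ≤ 2*k'+1 := by omega
      have : (m:ℝ) ≤ 2*(k':ℝ)+1 := by exact_mod_cast this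
      linarith
    · intro hk'2
      have : 2*k' ≤ m := by omega
      have : 2*(k':ℝ) ≤ (m:ℝ) := by exact_mod_cast this
      linarith
  refine ⟨?_, ?_, ?_⟩
  · rw [qmu, qnu]
    rcases (by omega : i = k ∨ i = k + 1) with h | h
    · rw [h]
      have heq : (2*(k:ℝ)-1)/(2*(n:ℝ)) - (k:ℝ)/n = -(1/(2*(n:ℝ))) := by
        field_simp; ring
      rw [heq, abs_neg, abs_of_pos (by positivity)]
    · rw [h]
      push_cast
      have heq : (2*((k:ℝ)+1)-1)/(2*(n:ℝ)) - (k:ℝ)/n = 1/(2*(n:ℝ)) := by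
        field_simp; ring
      rw [heq, abs_of_pos (by positivity)]
  · rw [qeta, qmu]
    rcases (by omega : k' = i ∨ k' + 1 = i) with h | h
    · rw [h]
      have heq : (i:ℝ)/n - (2*(i:ℝ)-1)/(2*(n:ℝ)) = 1/(2*(n:ℝ)) := by
        field_simp; ring
      rw [heq, abs_of_pos (by positivity)]
    · rw [← h]
      push_cast
      have heq : (k':ℝ)/n - (2*((k':ℝ)+1)-1)/(2*(n:ℝ)) = -(1/(2*(n:ℝ))) := by
        field_simp; ring
      rw [heq, abs_neg, abs_of_pos (by positivity)]
  · rw [qeta, qnu]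
    split_ifs with hcase1 hcase2
    · have hmle : m ≤ 1 := by
        rw [hm]
        apply Nat.ceil_le.mpr
        have : u * (2*(n:ℝ)) ≤ 1 := by
          rw [← le_div_iff₀ h2n0]; exact hcase1
        simpa using this
      have hk0 : k = 0 := by omega
      have hk'one : k' = 1 := by omega
      rw [hk0, hk'one]
      norm_num
    · have hgt : ((2*n - 1 : ℕ):ℝ) < u * (2*(n:ℝ)) := by
        have hc : (1 - 1/(2*(n:ℝ))) * (2*n) < u * (2*n) :=
          mul_lt_mul_of_pos_right hcase2 h2n0
        have : (1 - 1/(2*(n:ℝ))) * (2*(n:ℝ)) = 2*(n:ℝ) - 1 := by field_simp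
        rw [this] at hc
        rw [Nat.cast_sub (by omega)]
        push_cast
        linarith
      have hmgt : 2*n - 1 < m := by
        rw [hm]
        exact Nat.lt_ceil.mpr hgt
      have hmeq : m = 2*n := by omega
      have hkn' : k = n := by omega
      have hk'eq : k' = n - 1 := by omega
      rw [hkn', hk'eq, Nat.cast_sub (by omega), Nat.cast_one]
      field_simp; ring
    · have hk1 : 1 ≤ k := by
        push_neg at hcase1
        have h1m : 1 < u * (2*(n:ℝ)) := (div_lt_iff₀ h2n0).mp hcase1
        have : 1 < m := by
          rw [hm]
          apply Nat.lt_ceil.mpr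
          simpa using h1m
        omega
      have hkub : k ≤ n - 1 := by
        push_neg at hcase2
        have : u * (2*(n:ℝ)) ≤ ((2*n - 1 : ℕ):ℝ) := by
          rw [Nat.cast_sub (by omega)]
          push_cast
          have hc : u * (2*(n:ℝ)) ≤ (1 - 1/(2*(n:ℝ))) * (2*n) :=
            mul_le_mul_of_nonneg_right hcase2 (by positivity)
          have : (1 - 1/(2*(n:ℝ))) * (2*(n:ℝ)) = 2*(n:ℝ) - 1 := by field_simp
          linarith [hc, this]
        have : m ≤ 2*n - 1 := by
          rw [hm]
          exact Nat.ceil_le.mpr this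
        omega
      have : k' = k := by omega
      rw [this, sub_self]

/-! ### Integral computations -/

lemma integral_I1 (hn : 3 ≤ n) (p : ℝ) :
    ∫ u in Ioo (0:ℝ) 1, |quantile (muM n) u - quantile (nuM n) u| ^ p
      = (1/(2*(n:ℝ)))^p := by
  rw [setIntegral_congr_fun measurableSet_Ioo
    (fun u hu => by simp only [(pointwise n hn u hu.1 hu.2).1] :
      EqOn (fun u => |quantile (muM n) u - quantile (nuM n) u| ^ p)
        (fun _ => (1/(2*(n:ℝ)))^p) (Ioo 0 1)),
    setIntegral_const]
  simp [Real.volume_Ioo]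

lemma integral_I2 (hn : 3 ≤ n) (p : ℝ) :
    ∫ u in Ioo (0:ℝ) 1, |quantile (etaM n) u - quantile (muM n) u| ^ p
      = (1/(2*(n:ℝ)))^p := by
  rw [setIntegral_congr_fun measurableSet_Ioo
    (fun u hu => by simp only [(pointwise n hn u hu.1 hu.2).2.1] :
      EqOn (fun u => |quantile (etaM n) u - quantile (muM n) u| ^ p)
        (fun _ => (1/(2*(n:ℝ)))^p) (Ioo 0 1)),
    setIntegral_const]
  simp [Real.volume_Ioo]

lemma integral_I3 (hn : 3 ≤ n) (p : ℝ) (hp : 1 ≤ p) :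
    ∫ u in Ioo (0:ℝ) 1, |quantile (etaM n) u - quantile (nuM n) u| ^ p
      = (1/(n:ℝ))^p * (1/(n:ℝ)) := by
  have hn0 : (0:ℝ) < n := by positivity
  have h2n0 : (0:ℝ) < 2*(n:ℝ) := by positivity
  have hn3 : (3:ℝ) ≤ (n:ℝ) := by exact_mod_cast hn
  have hq : (0:ℝ) < 1/(2*(n:ℝ)) := by positivity
  have key : 1/(2*(n:ℝ)) ≤ 1/6 := by
    rw [div_le_div_iff₀ h2n0 (by norm_num : (0:ℝ) < 6)]
    linarith
  have hhalf : 1/(2*(n:ℝ)) < 1 - 1/(2*(n:ℝ)) := by linarith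
  have hlt1 : 1/(2*(n:ℝ)) < 1 := by linarith
  have hpos : (0:ℝ) < 1 - 1/(2*(n:ℝ)) := by linarith
  set c := (1/(n:ℝ))^p with hc
  have hp0 : p ≠ 0 := by linarith
  have hEq : EqOn (fun u => |quantile (etaM n) u - quantile (nuM n) u| ^ p)
      (fun u => (Iic (1/(2*(n:ℝ)))).indicator (fun _ => c) u
        + (Ioi (1 - 1/(2*(n:ℝ)))).indicator (fun _ => c) u) (Ioo 0 1) := by
    intro u hu
    simp only
    rw [(pointwise n hn u hu.1 hu.2).2.2]
    split_ifs with h1 h2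
    · rw [indicator_of_mem (by exact h1 : u ∈ Iic (1/(2*(n:ℝ)))),
        indicator_of_notMem (by simp only [mem_Ioi, not_lt]; linarith)]
      rw [abs_of_pos (by positivity), add_zero]
    · rw [indicator_of_notMem (by simp only [mem_Iic, not_le]; linarith),
        indicator_of_mem (by exact h2 : u ∈ Ioi (1 - 1/(2*(n:ℝ))))]
      rw [abs_neg, abs_of_pos (by positivity), zero_add]
    · rw [indicator_of_notMem (by simp only [mem_Iic, not_le]; push_neg at h1; exact h1),
        indicator_of_notMem (by simp only [mem_Ioi, not_lt]; push_neg at h2; exact h2)]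
      rw [abs_zero, Real.zero_rpow hp0, add_zero]
  rw [setIntegral_congr_fun measurableSet_Ioo hEq]
  haveI : IsFiniteMeasure (volume.restrict (Ioo (0:ℝ) 1)) := by
    constructor
    rw [Measure.restrict_apply_univ, Real.volume_Ioo]
    exact ENNReal.ofReal_lt_top
  rw [integral_add
    ((integrable_const c).indicator measurableSet_Iic)
    ((integrable_const c).indicator measurableSet_Ioi)]
  rw [integral_indicator measurableSet_Iic, integral_indicator measurableSet_Ioi,
    Measure.restrict_restrict measurableSet_Iic,
    Measure.restrict_restrict measurableSet_Ioi,
    setIntegral_const, setIntegral_const]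
  have hset1 : Iic (1/(2*(n:ℝ))) ∩ Ioo 0 1 = Ioc 0 (1/(2*(n:ℝ))) := by
    ext x
    simp only [mem_inter_iff, mem_Iic, mem_Ioo, mem_Ioc]
    constructor
    · rintro ⟨a, b, _⟩; exact ⟨b, a⟩
    · rintro ⟨a, b⟩; exact ⟨b, a, by linarith⟩
  have hset2 : Ioi (1 - 1/(2*(n:ℝ))) ∩ Ioo 0 1 = Ioo (1 - 1/(2*(n:ℝ))) 1 := by
    ext x
    simp only [mem_inter_iff, mem_Ioi, mem_Ioo]
    constructor
    · rintro ⟨a, _, b⟩; exact ⟨a, b⟩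
    · rintro ⟨a, b⟩; exact ⟨a, by linarith, b⟩
  rw [hset1, hset2, Real.volume_real_Ioc_of_le (by linarith),
    Real.volume_real_Ioo_of_le (by linarith),
    smul_eq_mul, smul_eq_mul]
  have : (1/(2*(n:ℝ)) - 0) * c + (1 - (1 - 1/(2*(n:ℝ)))) * c = (1/(n:ℝ)) * c := by
    field_simp
    ring
  rw [this, hc]
  ring_nf

/-! ### Wasserstein distances -/

lemma Wp_rpow (x p : ℝ) (hx : 0 ≤ x) (hp : 1 ≤ p) : (x ^ p) ^ (1/p) = x := by
  have hp0 : p ≠ 0 := by linarith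
  rw [← Real.rpow_mul hx, mul_one_div, div_self hp0, Real.rpow_one]

end Aux

theorem lattice_not_lipschitz' (n : ℕ) (hn : 3 ≤ n) (p : ℝ) (hp : 1 ≤ p) :
    Wp p (Aux.muM n) (Aux.nuM n) = 1 / (2 * n) ∧
    Wp p (Aux.etaM n) (Aux.muM n) = 1 / (2 * n) ∧
    Wp p (Aux.etaM n) (Aux.nuM n) = (n : ℝ) ^ (-(1 + 1 / p)) ∧
    Wp p (Aux.muM n) (Aux.nuM n) / Wp p (Aux.etaM n) (Aux.nuM n)
      = (n : ℝ) ^ (1 / p) / 2 := by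
  have hn0 : (0:ℝ) < n := by positivity
  have hp0 : p ≠ 0 := by linarith
  have W1 : Wp p (Aux.muM n) (Aux.nuM n) = 1 / (2 * (n:ℝ)) := by
    rw [Wp, Aux.integral_I1 n hn p, Aux.Wp_rpow _ _ (by positivity) hp]
  have W2 : Wp p (Aux.etaM n) (Aux.muM n) = 1 / (2 * (n:ℝ)) := by
    rw [Wp, Aux.integral_I2 n hn p, Aux.Wp_rpow _ _ (by positivity) hp]
  have W3 : Wp p (Aux.etaM n) (Aux.nuM n) = (n:ℝ) ^ (-(1 + 1/p)) := by
    rw [Wp, Aux.integral_I3 n hn p hp]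
    have e1 : (1/(n:ℝ))^p * (1/(n:ℝ)) = (1/(n:ℝ))^(p+1) := by
      rw [Real.rpow_add (by positivity) p 1, Real.rpow_one]
    rw [e1, ← Real.rpow_mul (by positivity)]
    have e2 : (p+1) * (1/p) = 1 + 1/p := by field_simp
    rw [e2, one_div (n:ℝ), Real.inv_rpow (le_of_lt hn0), ← Real.rpow_neg (le_of_lt hn0)]
  refine ⟨W1, W2, W3, ?_⟩
  have hsplit : (n:ℝ)^(1+1/p) = n * (n:ℝ)^(1/p) := by
    rw [Real.rpow_add hn0 1 (1/p), Real.rpow_one]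
  rw [W1, W3, Real.rpow_neg (le_of_lt hn0), hsplit, div_eq_mul_inv, inv_inv]
  have hrp : (0:ℝ) < (n:ℝ) ^ (1/p) := Real.rpow_pos_of_pos hn0 _
  field_simp

end

/-- for the discrete measures `η`, `μ`, `ν` below,
`W_p(μ,ν) = W_p(η,μ) = 1/(2n)`, `W_p(η,ν) = n^{-1-1/p}` and
`W_p(μ,ν)/W_p(η,ν) = n^{1/p}/2`, showing that the convex-order lattice operations are not
Lipschitz continuous w.r.t. `W_p`. -/
theorem lattice_not_lipschitz (n : ℕ) (hn : 3 ≤ n) (p : ℝ) (hp : 1 ≤ p)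
    (ν μ η : Measure ℝ)
    (hν : ν = (1 / (2 * n) : ENNReal) • Measure.dirac (0:ℝ)
        + ∑ i ∈ Finset.Icc 1 (n - 1), (1 / n : ENNReal) • Measure.dirac ((i : ℝ) / n)
        + (1 / (2 * n) : ENNReal) • Measure.dirac (1:ℝ))
    (hμ : μ = ∑ i ∈ Finset.Icc 1 n,
        (1 / n : ENNReal) • Measure.dirac ((2 * (i : ℝ) - 1) / (2 * n)))
    (hη : η = (3 / (2 * n) : ENNReal) • Measure.dirac ((1 : ℝ) / n)
        + ∑ i ∈ Finset.Icc 2 (n - 2), (1 / n : ENNReal) • Measure.dirac ((i : ℝ) / n)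
        + (3 / (2 * n) : ENNReal) • Measure.dirac (((n : ℝ) - 1) / n)) :
    Wp p μ ν = 1 / (2 * n) ∧ Wp p η μ = 1 / (2 * n) ∧
    Wp p η ν = (n : ℝ) ^ (-(1 + 1 / p)) ∧
    Wp p μ ν / Wp p η ν = (n : ℝ) ^ (1 / p) / 2 := by
  have hμ' : μ = Aux.muM n := by rw [hμ]; rfl
  have hν' : ν = Aux.nuM n := by rw [hν]; rfl
  have hη' : η = Aux.etaM n := by rw [hη]; rfl
  rw [hμ', hν', hη']
  exact lattice_not_lipschitz' n hn p hp
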